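/- There exists a strategy S (namely: each player points at the hat on his own head in the position of the first white hat on the partner's head, defaulting to hat 0 if the partner has no white hat) such that for every p ∈ [0,1], V_S(p) = p/(2-p). In particular, V(p) ≥ p/(2-p) for all p ∈ [0,1]. -/

import Mathlib

open MeasureTheory ENNReal

/-- `μ` is the i.i.d. Bernoulli(`p`) product measure on `ℕ → Bool`
(`true` = white), characterized by its values on cylinder sets. -/
def IsBernoulliProduct (p : ℝ) (μ : Measure (ℕ → Bool)) : Prop :=
  IsProbabilityMeasure μ ∧
    ∀ (s : Finset ℕ) (c : ℕ → Bool),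
      μ {x | ∀ n ∈ s, x n = c n} =
        ∏ n ∈ s, (if c n = true then ENNReal.ofReal p else ENNReal.ofReal (1 - p))

/-- A strategy: a pair of measurable functions, each taking the partner's
hat configuration to the index of the hat the player points at. -/
structure Strategy where
  f₁ : (ℕ → Bool) → ℕ
  f₂ : (ℕ → Bool) → ℕ
  meas₁ : Measurable f₁
  meas₂ : Measurable f₂

/-- The winning probability of a strategy, when each player's hats are
distributed according to `μ`, independently. -/
noncomputable def winProb (S : Strategy) (μ : Measure (ℕ → Bool)) : ℝ :=
  ((μ.prod μ) {x : (ℕ → Bool) × (ℕ → Bool) |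
    x.1 (S.f₁ x.2) = true ∧ x.2 (S.f₂ x.1) = true}).toReal

/-- The value of the game: supremum of winning probabilities over all strategies. -/
noncomputable def gameValue (μ : Measure (ℕ → Bool)) : ℝ :=
  ⨆ S : Strategy, winProb S μ

/-- The index of the first white (`true`) hat, defaulting to `0` if there is none. -/
noncomputable def firstWhite (x : ℕ → Bool) : ℕ :=
  haveI := Classical.dec (∃ n, x n = true)
  if h : ∃ n, x n = true then Nat.find h else 0

/-- Auxiliary set: configurations whose first white hat is exactly at `i`. -/
def Aset (i : ℕ) : Set (ℕ → Bool) := {x | x i = true ∧ ∀ k < i, x k = false}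

lemma measurableSet_coord (n : ℕ) (b : Bool) : MeasurableSet {x : ℕ → Bool | x n = b} := by
  have h : {x : ℕ → Bool | x n = b} = (fun x : ℕ → Bool => x n) ⁻¹' {b} := rfl
  rw [h]
  exact (measurable_pi_apply n) (MeasurableSet.singleton b)

lemma measurableSet_Aset (i : ℕ) : MeasurableSet (Aset i) := by
  have h : Aset i = {x : ℕ → Bool | x i = true} ∩ ⋂ k ∈ Set.Iio i, {x | x k = false} := by
    ext x; simp [Aset]
  rw [h]
  exact (measurableSet_coord i true).inter
    (MeasurableSet.biInter (Set.to_countable _) fun k _ => measurableSet_coord k false)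

lemma firstWhite_spec {x : ℕ → Bool} (h : ∃ n, x n = true) :
    x (firstWhite x) = true := by
  simp only [firstWhite]
  rw [dif_pos h]
  exact Nat.find_spec h

lemma firstWhite_le {x : ℕ → Bool} {n : ℕ} (h : x n = true) : firstWhite x ≤ n := by
  have hex : ∃ n, x n = true := ⟨n, h⟩
  simp only [firstWhite]
  rw [dif_pos hex]
  exact Nat.find_le h

lemma mem_Aset_iff (x : ℕ → Bool) (i : ℕ) :
    x ∈ Aset i ↔ firstWhite x = i ∧ x i = true := by
  constructor
  · rintro ⟨hi, hlt⟩
    have hex : ∃ n, x n = true := ⟨i, hi⟩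
    refine ⟨?_, hi⟩
    simp only [firstWhite]
    rw [dif_pos hex]
    exact (Nat.find_eq_iff hex).2 ⟨hi, fun k hk => by simp [hlt k hk]⟩
  · rintro ⟨hfw, hi⟩
    have hex : ∃ n, x n = true := ⟨i, hi⟩
    refine ⟨hi, fun k hk => ?_⟩
    simp only [firstWhite] at hfw
    rw [dif_pos hex] at hfw
    have := Nat.find_min hex (by omega : k < Nat.find hex)
    simpa using this

lemma measurable_firstWhite : Measurable firstWhite := by
  apply measurable_to_countable'
  intro i
  have hkey : firstWhite ⁻¹' {i} = Aset i ∪ {x | i = 0 ∧ ∀ n, x n = false} := by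
    ext x
    simp only [Set.mem_preimage, Set.mem_singleton_iff, Set.mem_union, Set.mem_setOf_eq]
    constructor
    · intro h
      by_cases hex : ∃ n, x n = true
      · left
        rw [mem_Aset_iff]
        refine ⟨h, ?_⟩
        rw [← h]
        exact firstWhite_spec hex
      · right
        refine ⟨?_, fun n => ?_⟩
        · rw [← h]
          simp only [firstWhite]
          rw [dif_neg hex]
        · push_neg at hex
          simpa using hex n
    · rintro (h | ⟨hi, hall⟩)
      · exact ((mem_Aset_iff x i).1 h).1
      · subst hi
        simp only [firstWhite]
        rw [dif_neg]
        push_neg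
        intro n
        simp [hall n]
  rw [hkey]
  refine (measurableSet_Aset i).union ?_
  rcases eq_or_ne i 0 with h0 | h0
  · have h : {x : ℕ → Bool | i = 0 ∧ ∀ n, x n = false} = ⋂ n, {x | x n = false} := by
      ext x; simp [h0]
    rw [h]
    exact MeasurableSet.iInter fun n => measurableSet_coord n false
  · have h : {x : ℕ → Bool | i = 0 ∧ ∀ n, x n = false} = ∅ := by ext x; simp [h0]
    rw [h]
    exact MeasurableSet.empty

lemma measure_Aset {p : ℝ} {μ : Measure (ℕ → Bool)} (h : IsBernoulliProduct p μ)
    (_hp0 : 0 ≤ p) (hp1 : p ≤ 1) (i : ℕ) :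
    μ (Aset i) = ENNReal.ofReal (p * (1 - p) ^ i) := by
  have hset : Aset i = {x | ∀ n ∈ Finset.range (i + 1), x n = decide (n = i)} := by
    ext x
    simp only [Aset, Set.mem_setOf_eq, Finset.mem_range]
    constructor
    · rintro ⟨hi, hlt⟩ n hn
      rcases eq_or_ne n i with rfl | hne
      · simp [hi]
      · have hlt' : n < i := lt_of_le_of_ne (Nat.lt_succ_iff.1 hn) hne
        simp [hlt n hlt', hne]
    · intro hx
      refine ⟨?_, fun k hk => ?_⟩
      · have := hx i (Nat.lt_succ_self i); simpa using this
      · have := hx k (Nat.lt_succ_of_lt hk); simpa [Nat.ne_of_lt hk] using this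
  rw [hset, h.2, Finset.prod_range_succ]
  have h1 : ∀ n ∈ Finset.range i,
      (if (decide (n = i)) = true then ENNReal.ofReal p else ENNReal.ofReal (1 - p))
      = ENNReal.ofReal (1 - p) := by
    intro n hn
    simp [Nat.ne_of_lt (Finset.mem_range.1 hn)]
  rw [Finset.prod_congr rfl h1, Finset.prod_const, Finset.card_range]
  have h2 : (if (decide (i = i)) = true then ENNReal.ofReal p else ENNReal.ofReal (1 - p))
      = ENNReal.ofReal p := by simp
  rw [h2, ← ENNReal.ofReal_pow (by linarith), ← ENNReal.ofReal_mul (pow_nonneg (by linarith) i),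
    mul_comm]

/-- There is a strategy (each player points at the position of the first white hat
on the partner's head) whose winning probability is `p / (2 - p)` for every
`p ∈ [0,1]`; consequently `V p ≥ p / (2 - p)`. -/
theorem first_white_strategy
    (μ : ℝ → Measure (ℕ → Bool))
    (hμ : ∀ p ∈ Set.Icc (0 : ℝ) 1, IsBernoulliProduct p (μ p)) :
    ∃ S : Strategy,
      S.f₁ = firstWhite ∧ S.f₂ = firstWhite ∧
      (∀ p ∈ Set.Icc (0 : ℝ) 1, winProb S (μ p) = p / (2 - p)) ∧
      (∀ p ∈ Set.Icc (0 : ℝ) 1, p / (2 - p) ≤ gameValue (μ p)) := by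
  set S : Strategy := ⟨firstWhite, firstWhite, measurable_firstWhite, measurable_firstWhite⟩
  have hwin : ∀ p ∈ Set.Icc (0 : ℝ) 1, winProb S (μ p) = p / (2 - p) := by
    rintro p ⟨hp0, hp1⟩
    have hB := hμ p ⟨hp0, hp1⟩
    have hq0 : (0 : ℝ) ≤ 1 - p := by linarith
    have hset : {x : (ℕ → Bool) × (ℕ → Bool) |
        x.1 (S.f₁ x.2) = true ∧ x.2 (S.f₂ x.1) = true} = ⋃ i, (Aset i) ×ˢ (Aset i) := by
      ext ⟨x, y⟩
      simp only [Set.mem_setOf_eq, Set.mem_iUnion, Set.mem_prod, S]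
      constructor
      · rintro ⟨hx, hy⟩
        have h1 : firstWhite x ≤ firstWhite y := firstWhite_le hx
        have h2 : firstWhite y ≤ firstWhite x := firstWhite_le hy
        have heq : firstWhite x = firstWhite y := le_antisymm h1 h2
        refine ⟨firstWhite x, ?_, ?_⟩
        · rw [mem_Aset_iff]
          exact ⟨rfl, heq ▸ hx⟩
        · rw [mem_Aset_iff]
          exact ⟨heq.symm, hy⟩
      · rintro ⟨i, hx, hy⟩
        obtain ⟨hfx, hxi⟩ := (mem_Aset_iff x i).1 hx
        obtain ⟨hfy, hyi⟩ := (mem_Aset_iff y i).1 hy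
        exact ⟨hfy ▸ hxi, hfx ▸ hyi⟩
    have hdisj : Pairwise (Function.onFun Disjoint fun i => (Aset i) ×ˢ (Aset i)) := by
      intro i j hij
      simp only [Function.onFun, Set.disjoint_left]
      rintro ⟨x, y⟩ ⟨hx, _⟩ ⟨hx', _⟩
      exact hij ((((mem_Aset_iff x i).1 hx).1).symm.trans (((mem_Aset_iff x j).1 hx').1))
    unfold winProb
    rw [hset, measure_iUnion hdisj
      (fun i => (measurableSet_Aset i).prod (measurableSet_Aset i))]
    have hterm : ∀ i, ((μ p).prod (μ p)) ((Aset i) ×ˢ (Aset i))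
        = ENNReal.ofReal (p ^ 2) * (ENNReal.ofReal ((1 - p) ^ 2)) ^ i := by
      intro i
      haveI : IsProbabilityMeasure (μ p) := hB.1
      rw [Measure.prod_prod, measure_Aset hB hp0 hp1 i,
        ← ENNReal.ofReal_mul (mul_nonneg hp0 (pow_nonneg hq0 i)),
        ← ENNReal.ofReal_pow (by positivity : (0:ℝ) ≤ (1 - p) ^ 2),
        ← ENNReal.ofReal_mul (by positivity : (0:ℝ) ≤ p ^ 2)]
      congr 1
      rw [← pow_mul]
      ring
    simp only [hterm]
    rw [ENNReal.tsum_mul_left, ENNReal.tsum_geometric]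
    rcases eq_or_lt_of_le hp0 with hp0' | hp0'
    · simp [← hp0']
    · have hpos : (0 : ℝ) < 1 - (1 - p) ^ 2 := by nlinarith
      have h1r : (1 : ℝ≥0∞) - ENNReal.ofReal ((1 - p) ^ 2) = ENNReal.ofReal (1 - (1 - p) ^ 2) := by
        rw [ENNReal.ofReal_sub _ (by positivity), ENNReal.ofReal_one]
      rw [h1r, ← ENNReal.ofReal_inv_of_pos hpos,
        ← ENNReal.ofReal_mul (by positivity),
        ENNReal.toReal_ofReal (mul_nonneg (sq_nonneg p) (inv_nonneg.2 hpos.le))]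
      have h2p : (0 : ℝ) < 2 - p := by linarith
      have hkey : 1 - (1 - p) ^ 2 = p * (2 - p) := by ring
      rw [hkey]
      have hp' : p ≠ 0 := ne_of_gt hp0'
      have h2p' : (2 : ℝ) - p ≠ 0 := ne_of_gt h2p
      field_simp
  refine ⟨S, rfl, rfl, hwin, ?_⟩
  intro p hp
  rw [← hwin p hp]
  have hbdd : BddAbove (Set.range fun T : Strategy => winProb T (μ p)) := by
    refine ⟨1, ?_⟩
    rintro r ⟨T, rfl⟩
    haveI := (hμ p hp).1
    haveI : IsProbabilityMeasure ((μ p).prod (μ p)) := inferInstance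
    calc winProb T (μ p) ≤ (1 : ℝ≥0∞).toReal :=
          ENNReal.toReal_mono one_ne_top prob_le_one
      _ = 1 := by simp
  exact le_ciSup hbdd S
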